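/- Let H = (V, E) be a hypergraph and let P = { x ∈ ℝ^E : x ≥ 0 and x(δ(𝒫)) ≥ |𝒫| − 1 for every partition 𝒫 of V into nonempty parts }. Then every extreme point of the polyhedron P is an integer-valued vector. -/

import Mathlib

open Finset

variable {V α : Type*}

/-- `F[X]`: the subfamily of hyperedges of `F` contained in `X`. -/
def restrict [DecidableEq V] (edge : α → Finset V) (F : Finset α) (X : Finset V) : Finset α :=
  F.filter fun e => edge e ⊆ X

/-- `F` is a hyperforest of the hypergraph `(V, E)` (with hyperedges given by `edge`). -/
def IsHyperforest [DecidableEq V] (edge : α → Finset V) (E F : Finset α) : Prop :=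
  F ⊆ E ∧ ∀ X : Finset V, X.Nonempty → (restrict edge F X).card ≤ X.card - 1

/-- `F` is a hypertree: a hyperforest with `|V| - 1` hyperedges. -/
def IsHypertree [Fintype V] [DecidableEq V] (edge : α → Finset V) (E F : Finset α) : Prop :=
  IsHyperforest edge E F ∧ F.card = Fintype.card V - 1

/-- `Ps` is a family of pairwise disjoint nonempty sets whose union is `S`. -/
def IsPartitionOf [DecidableEq V] (Ps : Finset (Finset V)) (S : Finset V) : Prop :=
  (∀ P ∈ Ps, P.Nonempty) ∧ (∀ P ∈ Ps, ∀ Q ∈ Ps, P ≠ Q → Disjoint P Q) ∧ Ps.sup id = S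

/-- `Ps` is a partition of the vertex set `V` into nonempty parts. -/
def IsPartition [Fintype V] [DecidableEq V] (Ps : Finset (Finset V)) : Prop :=
  IsPartitionOf Ps Finset.univ

/-- `δ_F(Ps)`: hyperedges of `F` contained in the union of the members of `Ps`
and intersecting at least two members of `Ps`. -/
def delta [DecidableEq V] (edge : α → Finset V) (F : Finset α) (Ps : Finset (Finset V)) :
    Finset α :=
  F.filter fun e => edge e ⊆ Ps.sup id ∧
    2 ≤ (Ps.filter fun P => (edge e ∩ P).Nonempty).card

set_option linter.unusedSectionVars false

namespace PPI

open scoped Classical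

variable [Fintype V] [DecidableEq V]

noncomputable def classOf (r : Setoid V) (v : V) : Finset V :=
  univ.filter fun w => r v w

lemma mem_classOf {r : Setoid V} {v w : V} : w ∈ classOf r v ↔ r v w := by
  simp [classOf]

lemma classOf_eq_iff {r : Setoid V} {v w : V} : classOf r v = classOf r w ↔ r v w := by
  constructor
  · intro h
    have hw : w ∈ classOf r w := mem_classOf.2 (r.refl' w)
    rw [← h] at hw
    exact mem_classOf.1 hw
  · intro h
    ext u
    simp only [mem_classOf]
    exact ⟨fun h' => r.trans' (r.symm' h) h', fun h' => r.trans' h h'⟩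

noncomputable def parts (r : Setoid V) : Finset (Finset V) := univ.image (classOf r)

noncomputable def nparts (r : Setoid V) : ℕ := (parts r).card

lemma isPartition_parts (r : Setoid V) : IsPartition (parts r) := by
  refine ⟨?_, ?_, ?_⟩
  · rintro P hP
    obtain ⟨v, -, rfl⟩ := Finset.mem_image.1 hP
    exact ⟨v, mem_classOf.2 (r.refl' v)⟩
  · rintro P hP Q hQ hne
    obtain ⟨v, -, rfl⟩ := Finset.mem_image.1 hP
    obtain ⟨w, -, rfl⟩ := Finset.mem_image.1 hQ
    rw [Finset.disjoint_left]
    intro u hu hu'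
    exact hne (classOf_eq_iff.2 (r.trans' (mem_classOf.1 hu) (r.symm' (mem_classOf.1 hu'))))
  · rw [Finset.eq_univ_iff_forall]
    intro v
    rw [Finset.mem_sup]
    exact ⟨classOf r v, Finset.mem_image_of_mem _ (mem_univ v), mem_classOf.2 (r.refl' v)⟩

noncomputable def classOfQ (r : Setoid V) : Quotient r → Finset V :=
  Quotient.lift (classOf r) fun _ _ h => classOf_eq_iff.2 h

lemma classOfQ_injective (r : Setoid V) : Function.Injective (classOfQ r) := by
  intro a b
  induction a using Quotient.ind with | _ v =>
  induction b using Quotient.ind with | _ w =>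
  intro h
  exact Quotient.sound (classOf_eq_iff.1 h)

lemma nparts_eq (r : Setoid V) : nparts r = Fintype.card (Quotient r) := by
  have h : parts r = (univ : Finset (Quotient r)).image (classOfQ r) := by
    ext P
    simp only [parts, Finset.mem_image]
    constructor
    · rintro ⟨v, -, rfl⟩; exact ⟨Quotient.mk r v, mem_univ _, rfl⟩
    · rintro ⟨q, -, rfl⟩
      induction q using Quotient.ind with | _ v => exact ⟨v, mem_univ _, rfl⟩
  rw [nparts, h, Finset.card_image_of_injective _ (classOfQ_injective r), Finset.card_univ]

def setoidOfAux (Ps : Finset (Finset V)) (h : IsPartition Ps) : Setoid V where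
  r v w := ∃ A ∈ Ps, v ∈ A ∧ w ∈ A
  iseqv := by
    constructor
    · intro v
      have hv : v ∈ Ps.sup id := by rw [h.2.2]; exact mem_univ v
      rw [Finset.mem_sup] at hv
      obtain ⟨A, hA, hvA⟩ := hv
      exact ⟨A, hA, hvA, hvA⟩
    · rintro v w ⟨A, hA, h1, h2⟩; exact ⟨A, hA, h2, h1⟩
    · rintro u v w ⟨A, hA, h1, h2⟩ ⟨B, hB, h3, h4⟩
      have hAB : A = B := by
        by_contra hne
        exact (Finset.disjoint_left.1 (h.2.1 A hA B hB hne)) h2 h3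
      exact ⟨A, hA, h1, hAB ▸ h4⟩

lemma parts_setoidOf (Ps : Finset (Finset V)) (h : IsPartition Ps) :
    parts (setoidOfAux Ps h) = Ps := by
  have key : ∀ v : V, ∀ A ∈ Ps, v ∈ A → classOf (setoidOfAux Ps h) v = A := by
    intro v A hA hvA
    ext w
    rw [mem_classOf]
    constructor
    · rintro ⟨B, hB, hvB, hwB⟩
      have hAB : A = B := by
        by_contra hne
        exact (Finset.disjoint_left.1 (h.2.1 A hA B hB hne)) hvA hvB
      exact hAB ▸ hwB
    · intro hw; exact ⟨A, hA, hvA, hw⟩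
  ext A
  simp only [parts, Finset.mem_image]
  constructor
  · rintro ⟨v, -, rfl⟩
    have hv : v ∈ Ps.sup id := by rw [h.2.2]; exact mem_univ v
    rw [Finset.mem_sup] at hv
    obtain ⟨B, hB, hvB⟩ := hv
    rw [key v B hB hvB]; exact hB
  · intro hA
    obtain ⟨v, hv⟩ := h.1 A hA
    exact ⟨v, mem_univ v, key v A hA hv⟩

lemma setoidOf_parts (r : Setoid V) : setoidOfAux (parts r) (isPartition_parts r) = r := by
  ext v w
  show (∃ A ∈ parts r, v ∈ A ∧ w ∈ A) ↔ r v w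
  constructor
  · rintro ⟨A, hA, hv, hw⟩
    obtain ⟨u, -, rfl⟩ := Finset.mem_image.1 hA
    exact r.trans' (r.symm' (mem_classOf.1 hv)) (mem_classOf.1 hw)
  · intro h
    exact ⟨classOf r v, Finset.mem_image_of_mem _ (mem_univ v),
      mem_classOf.2 (r.refl' v), mem_classOf.2 h⟩

noncomputable def toSetoid (Ps : Finset (Finset V)) : Setoid V :=
  if h : IsPartition Ps then setoidOfAux Ps h else ⊤

noncomputable instance setoidFintype : Fintype (Setoid V) :=
  Fintype.ofSurjective toSetoid
    (fun r => ⟨parts r, by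
      rw [toSetoid, dif_pos (isPartition_parts r)]; exact setoidOf_parts r⟩)

/-! ### The dimension argument for supermodularity of the number of parts -/

noncomputable def Wspace (r : Setoid V) : Submodule ℝ (V → ℝ) :=
  LinearMap.range (LinearMap.funLeft ℝ ℝ (Quotient.mk r))

lemma mem_Wspace {r : Setoid V} {g : V → ℝ} : g ∈ Wspace r ↔ r ≤ Setoid.ker g := by
  constructor
  · rintro ⟨f, rfl⟩
    intro v w h
    show f (Quotient.mk r v) = f (Quotient.mk r w)
    rw [Quotient.sound h]
  · intro h
    exact ⟨Quotient.lift g fun v w hvw => h hvw, rfl⟩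

lemma finrank_Wspace (r : Setoid V) :
    Module.finrank ℝ (Wspace r) = Fintype.card (Quotient r) := by
  rw [Wspace, LinearMap.finrank_range_of_inj, Module.finrank_pi]
  exact LinearMap.funLeft_injective_of_surjective ℝ ℝ _ fun q => Quotient.exists_rep q

lemma nparts_superadditive (r s : Setoid V) :
    nparts r + nparts s ≤ nparts (r ⊓ s) + nparts (r ⊔ s) := by
  have h1 : Wspace r ⊔ Wspace s ≤ Wspace (r ⊓ s : Setoid V) := by
    apply sup_le
    · intro g hg; rw [mem_Wspace] at hg ⊢; exact le_trans inf_le_left hg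
    · intro g hg; rw [mem_Wspace] at hg ⊢; exact le_trans inf_le_right hg
  have h2 : Wspace (r ⊔ s : Setoid V) = Wspace r ⊓ Wspace s := by
    ext g
    simp only [Submodule.mem_inf, mem_Wspace, sup_le_iff]
  have h3 := Submodule.finrank_sup_add_finrank_inf_eq (Wspace r) (Wspace s)
  have h4 := Submodule.finrank_mono (M := V → ℝ) (R := ℝ) h1
  rw [nparts_eq r, nparts_eq s, nparts_eq (r ⊓ s), nparts_eq (r ⊔ s),
    ← finrank_Wspace, ← finrank_Wspace, ← finrank_Wspace, ← finrank_Wspace, h2]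
  omega


/-! ### `delta` in setoid language -/

variable [DecidableEq α]

noncomputable def Dset (edge : α → Finset V) (E : Finset α) (r : Setoid V) : Finset α :=
  E.filter fun e => ∃ v ∈ edge e, ∃ w ∈ edge e, ¬ r v w

lemma delta_eq_Dset (edge : α → Finset V) (E : Finset α) (Ps : Finset (Finset V))
    (h : IsPartition Ps) : delta edge E Ps = Dset edge E (setoidOfAux Ps h) := by
  ext e
  simp only [delta, Dset, Finset.mem_filter]
  refine and_congr_right fun heE => ?_
  rw [h.2.2]
  simp only [Finset.subset_univ, true_and]
  constructor
  · intro h2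
    obtain ⟨A, hA, B, hB, hAB⟩ := Finset.one_lt_card.1 h2
    rw [Finset.mem_filter] at hA hB
    obtain ⟨v, hv⟩ := hA.2
    obtain ⟨w, hw⟩ := hB.2
    rw [Finset.mem_inter] at hv hw
    refine ⟨v, hv.1, w, hw.1, ?_⟩
    rintro ⟨C, hC, hvC, hwC⟩
    have h1 : A = C := by
      by_contra hne
      exact (Finset.disjoint_left.1 (h.2.1 A hA.1 C hC hne)) hv.2 hvC
    have h2' : B = C := by
      by_contra hne
      exact (Finset.disjoint_left.1 (h.2.1 B hB.1 C hC hne)) hw.2 hwC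
    exact hAB (h1.trans h2'.symm)
  · rintro ⟨v, hv, w, hw, hvw⟩
    have hvs : v ∈ Ps.sup id := by rw [h.2.2]; exact mem_univ v
    have hws : w ∈ Ps.sup id := by rw [h.2.2]; exact mem_univ w
    rw [Finset.mem_sup] at hvs hws
    obtain ⟨A, hA, hvA⟩ := hvs
    obtain ⟨B, hB, hwB⟩ := hws
    refine Finset.one_lt_card.2 ⟨A, ?_, B, ?_, ?_⟩
    · exact Finset.mem_filter.2 ⟨hA, ⟨v, Finset.mem_inter.2 ⟨hv, hvA⟩⟩⟩
    · exact Finset.mem_filter.2 ⟨hB, ⟨w, Finset.mem_inter.2 ⟨hw, hwB⟩⟩⟩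
    · rintro rfl
      exact hvw ⟨A, hA, hvA, hwB⟩

lemma card_eq_nparts (Ps : Finset (Finset V)) (h : IsPartition Ps) :
    Ps.card = nparts (setoidOfAux Ps h) := by
  rw [nparts, parts_setoidOf]

lemma Dset_antitone (edge : α → Finset V) (E : Finset α) {r s : Setoid V} (h : r ≤ s) :
    Dset edge E s ⊆ Dset edge E r := by
  intro e he
  rw [Dset, Finset.mem_filter] at he ⊢
  obtain ⟨hE, v, hv, w, hw, hvw⟩ := he
  exact ⟨hE, v, hv, w, hw, fun hr => hvw (h hr)⟩

lemma Dset_inf_subset (edge : α → Finset V) (E : Finset α) (r s : Setoid V) :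
    Dset edge E (r ⊓ s) ⊆ Dset edge E r ∪ Dset edge E s := by
  intro e he
  rw [Dset, Finset.mem_filter] at he
  obtain ⟨hE, v, hv, w, hw, hvw⟩ := he
  have hvw' : ¬(r v w ∧ s v w) := fun h' => hvw (Setoid.inf_iff_and.2 h')
  rw [not_and_or] at hvw'
  rw [Finset.mem_union]
  rcases hvw' with h | h
  · exact Or.inl (Finset.mem_filter.2 ⟨hE, v, hv, w, hw, h⟩)
  · exact Or.inr (Finset.mem_filter.2 ⟨hE, v, hv, w, hw, h⟩)

lemma Dset_top (edge : α → Finset V) (E : Finset α) : Dset edge E (⊤ : Setoid V) = ∅ := by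
  rw [Dset]
  apply Finset.filter_false_of_mem
  rintro e - ⟨v, -, w, -, hvw⟩
  exact hvw trivial

lemma nparts_top (hV : Nonempty V) : nparts (⊤ : Setoid V) = 1 := by
  rw [nparts_eq, Fintype.card_eq_one_iff]
  obtain ⟨v⟩ := hV
  refine ⟨Quotient.mk _ v, fun q => ?_⟩
  induction q using Quotient.ind with | _ w => exact Quotient.sound trivial

end PPI
/-- every extreme point of the polyhedron
`P = { x ∈ ℝ^E : x ≥ 0, x(δ(Ps)) ≥ |Ps| - 1 for every partition Ps of V }`
is integer valued. -/
theorem partition_polyhedron_integral [Fintype V] [DecidableEq V] [DecidableEq α]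
    (edge : α → Finset V) (E : Finset α)
    (hV : 1 ≤ Fintype.card V) (hE : ∀ e ∈ E, 2 ≤ (edge e).card) :
    ∀ x ∈ Set.extremePoints ℝ {x : α → ℝ |
        (∀ e, e ∉ E → x e = 0) ∧ (∀ e, 0 ≤ x e) ∧
        ∀ Ps : Finset (Finset V), IsPartition Ps →
          (Ps.card : ℝ) - 1 ≤ ∑ e ∈ delta edge E Ps, x e},
      ∀ e : α, ∃ n : ℤ, x e = n := by
  classical
  intro x hx
  obtain ⟨⟨hx0, hxnn, hxP⟩, hxExt⟩ := hx
  -- the support of x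
  set S : Finset α := E.filter (fun e => x e ≠ 0) with hS_def
  have hxS : ∀ e ∉ S, x e = 0 := by
    intro e he
    by_cases hEe : e ∈ E
    · by_contra hne
      exact he (Finset.mem_filter.2 ⟨hEe, hne⟩)
    · exact hx0 e hEe
  have hxSpos : ∀ e ∈ S, 0 < x e := fun e he =>
    lt_of_le_of_ne (hxnn e) (Ne.symm (Finset.mem_filter.1 he).2)
  have hSE : S ⊆ E := Finset.filter_subset _ _
  have sum_inter : ∀ (y : α → ℝ), (∀ e ∉ S, y e = 0) → ∀ B : Finset α,
      ∑ e ∈ B ∩ S, y e = ∑ e ∈ B, y e := by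
    intro y hy B
    apply Finset.sum_subset Finset.inter_subset_left
    intro e heB heBS
    exact hy e fun heS => heBS (Finset.mem_inter.2 ⟨heB, heS⟩)
  -- feasibility in setoid language
  have feas : ∀ r : Setoid V, (PPI.nparts r : ℝ) - 1 ≤ ∑ e ∈ PPI.Dset edge E r, x e := by
    intro r
    have h := hxP (PPI.parts r) (PPI.isPartition_parts r)
    rwa [PPI.delta_eq_Dset edge E _ (PPI.isPartition_parts r),
      PPI.card_eq_nparts _ (PPI.isPartition_parts r), PPI.setoidOf_parts] at h
  -- membership builder
  have memA : ∀ y : α → ℝ, (∀ e, e ∉ E → y e = 0) → (∀ e, 0 ≤ y e) →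
      (∀ r : Setoid V, (PPI.nparts r : ℝ) - 1 ≤ ∑ e ∈ PPI.Dset edge E r, y e) →
      y ∈ {x : α → ℝ |
        (∀ e, e ∉ E → x e = 0) ∧ (∀ e, 0 ≤ x e) ∧
        ∀ Ps : Finset (Finset V), IsPartition Ps →
          (Ps.card : ℝ) - 1 ≤ ∑ e ∈ delta edge E Ps, x e} := by
    intro y h1 h2 h3
    refine ⟨h1, h2, fun Ps hPs => ?_⟩
    rw [PPI.delta_eq_Dset edge E Ps hPs, PPI.card_eq_nparts Ps hPs]
    exact h3 _
  have tight_top : ∑ e ∈ PPI.Dset edge E (⊤ : Setoid V), x e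
      = (PPI.nparts (⊤ : Setoid V) : ℝ) - 1 := by
    have hne : Nonempty V := Fintype.card_pos_iff.1 (by omega)
    rw [PPI.Dset_top, PPI.nparts_top hne]
    simp
  -- uncrossing
  have uncross : ∀ r s : Setoid V,
      (∑ e ∈ PPI.Dset edge E r, x e = (PPI.nparts r : ℝ) - 1) →
      (∑ e ∈ PPI.Dset edge E s, x e = (PPI.nparts s : ℝ) - 1) →
      (∑ e ∈ PPI.Dset edge E (r ⊓ s), x e = (PPI.nparts (r ⊓ s) : ℝ) - 1) ∧
      (∑ e ∈ PPI.Dset edge E (r ⊔ s), x e = (PPI.nparts (r ⊔ s) : ℝ) - 1) ∧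
      PPI.Dset edge E (r ⊓ s) ∩ S = (PPI.Dset edge E r ∪ PPI.Dset edge E s) ∩ S ∧
      PPI.Dset edge E (r ⊔ s) ∩ S = (PPI.Dset edge E r ∩ PPI.Dset edge E s) ∩ S := by
    intro r s hr hs
    have hsub1 := PPI.Dset_inf_subset edge E r s
    have hsub2 : PPI.Dset edge E (r ⊔ s) ⊆ PPI.Dset edge E r ∩ PPI.Dset edge E s :=
      Finset.subset_inter (PPI.Dset_antitone edge E le_sup_left)
        (PPI.Dset_antitone edge E le_sup_right)
    have hui : ∑ e ∈ PPI.Dset edge E r ∪ PPI.Dset edge E s, x e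
        + ∑ e ∈ PPI.Dset edge E r ∩ PPI.Dset edge E s, x e
        = ∑ e ∈ PPI.Dset edge E r, x e + ∑ e ∈ PPI.Dset edge E s, x e :=
      Finset.sum_union_inter
    have h2 : ∑ e ∈ PPI.Dset edge E (r ⊓ s), x e
        ≤ ∑ e ∈ PPI.Dset edge E r ∪ PPI.Dset edge E s, x e :=
      Finset.sum_le_sum_of_subset_of_nonneg hsub1 fun e _ _ => hxnn e
    have h3 : ∑ e ∈ PPI.Dset edge E (r ⊔ s), x e
        ≤ ∑ e ∈ PPI.Dset edge E r ∩ PPI.Dset edge E s, x e :=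
      Finset.sum_le_sum_of_subset_of_nonneg hsub2 fun e _ _ => hxnn e
    have hcount : (PPI.nparts r : ℝ) + PPI.nparts s
        ≤ (PPI.nparts (r ⊓ s) : ℝ) + PPI.nparts (r ⊔ s) := by
      exact_mod_cast PPI.nparts_superadditive r s
    have f1 := feas (r ⊓ s)
    have f2 := feas (r ⊔ s)
    have e3 : ∑ e ∈ PPI.Dset edge E (r ⊓ s), x e
        = ∑ e ∈ PPI.Dset edge E r ∪ PPI.Dset edge E s, x e := by linarith
    have e4 : ∑ e ∈ PPI.Dset edge E (r ⊔ s), x e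
        = ∑ e ∈ PPI.Dset edge E r ∩ PPI.Dset edge E s, x e := by linarith
    refine ⟨by linarith, by linarith, ?_, ?_⟩
    · have hzero : ∑ e ∈ (PPI.Dset edge E r ∪ PPI.Dset edge E s) \ PPI.Dset edge E (r ⊓ s),
          x e = 0 := by
        have hsd := Finset.sum_sdiff (f := x) hsub1
        linarith
      have hz := (Finset.sum_eq_zero_iff_of_nonneg fun e' _ => hxnn e').1 hzero
      apply Finset.Subset.antisymm
      · exact Finset.inter_subset_inter hsub1 Finset.Subset.rfl
      · intro e he
        rw [Finset.mem_inter] at he ⊢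
        refine ⟨?_, he.2⟩
        by_contra hne
        exact (hxSpos e he.2).ne' (hz e (Finset.mem_sdiff.2 ⟨he.1, hne⟩))
    · have hzero : ∑ e ∈ (PPI.Dset edge E r ∩ PPI.Dset edge E s) \ PPI.Dset edge E (r ⊔ s),
          x e = 0 := by
        have hsd := Finset.sum_sdiff (f := x) hsub2
        linarith
      have hz := (Finset.sum_eq_zero_iff_of_nonneg fun e' _ => hxnn e').1 hzero
      apply Finset.Subset.antisymm
      · exact Finset.inter_subset_inter hsub2 Finset.Subset.rfl
      · intro e he
        rw [Finset.mem_inter] at he ⊢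
        refine ⟨?_, he.2⟩
        by_contra hne
        exact (hxSpos e he.2).ne' (hz e (Finset.mem_sdiff.2 ⟨he.1, hne⟩))
  -- numeric helper
  have key : ∀ ε' t c : ℝ, 0 ≤ c → 0 ≤ t → ε' ≤ t / (c + 1) → ε' * c ≤ t := by
    intro ε' t c hc ht hle
    have h1 : ε' * c ≤ (t / (c + 1)) * c := mul_le_mul_of_nonneg_right hle hc
    have h2 : (t / (c + 1)) * c ≤ t := by
      rw [div_mul_eq_mul_div, div_le_iff₀ (by linarith)]
      nlinarith
    linarith
  -- the perturbation argument: rigidity at an extreme point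
  have orth : ∀ d : α → ℝ, (∀ e, e ∉ S → d e = 0) →
      (∀ r : Setoid V, (∑ e ∈ PPI.Dset edge E r, x e = (PPI.nparts r : ℝ) - 1) →
        ∑ e ∈ PPI.Dset edge E r ∩ S, d e = 0) →
      d = 0 := by
    intro d hd hdT
    by_contra hdne
    have hex : ∃ e0, d e0 ≠ 0 := by
      by_contra h
      push_neg at h
      exact hdne (funext fun e => h e)
    obtain ⟨e0, he0⟩ := hex
    have he0S : e0 ∈ S := by
      by_contra h
      exact he0 (hd e0 h)
    have hdT' : ∀ r : Setoid V, (∑ e ∈ PPI.Dset edge E r, x e = (PPI.nparts r : ℝ) - 1) →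
        ∑ e ∈ PPI.Dset edge E r, d e = 0 := by
      intro r hr
      rw [← sum_inter d hd]
      exact hdT r hr
    have hSne : S.Nonempty := ⟨e0, he0S⟩
    set ε1 : ℝ := S.inf' hSne (fun e => x e / (|d e| + 1)) with hε1
    have hε1pos : 0 < ε1 := by
      rw [hε1, Finset.lt_inf'_iff]
      intro e he
      exact div_pos (hxSpos e he) (by positivity)
    set ntF : Finset (Setoid V) := (Finset.univ : Finset (Setoid V)).filter
      (fun r => ¬ (∑ e ∈ PPI.Dset edge E r, x e = (PPI.nparts r : ℝ) - 1)) with hntF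
    set ε2 : ℝ := (insert (1 : ℝ) (ntF.image fun r =>
      (∑ e ∈ PPI.Dset edge E r, x e - ((PPI.nparts r : ℝ) - 1))
        / (|∑ e ∈ PPI.Dset edge E r, d e| + 1))).min' (Finset.insert_nonempty _ _) with hε2
    have hε2pos : 0 < ε2 := by
      rw [hε2, Finset.lt_min'_iff]
      intro b hb
      rcases Finset.mem_insert.1 hb with rfl | hb
      · norm_num
      · obtain ⟨r, hr, rfl⟩ := Finset.mem_image.1 hb
        rw [hntF, Finset.mem_filter] at hr
        have hgt : (PPI.nparts r : ℝ) - 1 < ∑ e ∈ PPI.Dset edge E r, x e :=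
          lt_of_le_of_ne (feas r) (fun h => hr.2 h.symm)
        exact div_pos (by linarith) (by positivity)
    set ε : ℝ := min ε1 ε2 with hεdef
    have hεpos : 0 < ε := lt_min hε1pos hε2pos
    have hmem : ∀ σ : ℝ, |σ| ≤ ε → (fun e => x e + σ * d e) ∈ {x : α → ℝ |
        (∀ e, e ∉ E → x e = 0) ∧ (∀ e, 0 ≤ x e) ∧
        ∀ Ps : Finset (Finset V), IsPartition Ps →
          (Ps.card : ℝ) - 1 ≤ ∑ e ∈ delta edge E Ps, x e} := by
      intro σ hσ
      apply memA
      · intro e he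
        rw [hd e (fun heS => he (hSE heS)), hx0 e he]
        ring
      · intro e
        by_cases heS : e ∈ S
        · have hb1 : ε ≤ x e / (|d e| + 1) :=
            le_trans (min_le_left _ _) (Finset.inf'_le _ heS)
          have hb2 : ε * |d e| ≤ x e := key ε (x e) (|d e|) (abs_nonneg _)
            (le_of_lt (hxSpos e heS)) hb1
          have habs : |σ * d e| ≤ ε * |d e| := by
            rw [abs_mul]
            exact mul_le_mul_of_nonneg_right hσ (abs_nonneg _)
          have := neg_abs_le (σ * d e)
          show 0 ≤ x e + σ * d e
          linarith
        · rw [hd e heS]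
          simpa using hxnn e
      · intro r
        have hsum : ∑ e ∈ PPI.Dset edge E r, (x e + σ * d e)
            = ∑ e ∈ PPI.Dset edge E r, x e + σ * ∑ e ∈ PPI.Dset edge E r, d e := by
          rw [Finset.sum_add_distrib, Finset.mul_sum]
        rw [hsum]
        by_cases hr : ∑ e ∈ PPI.Dset edge E r, x e = (PPI.nparts r : ℝ) - 1
        · rw [hdT' r hr, hr]
          simp
        · have hb1 : ε ≤ (∑ e ∈ PPI.Dset edge E r, x e - ((PPI.nparts r : ℝ) - 1))
              / (|∑ e ∈ PPI.Dset edge E r, d e| + 1) := by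
            refine le_trans (min_le_right _ _) (Finset.min'_le _ _ ?_)
            refine Finset.mem_insert_of_mem (Finset.mem_image_of_mem _ ?_)
            rw [hntF, Finset.mem_filter]
            exact ⟨Finset.mem_univ _, hr⟩
          have hgt : (PPI.nparts r : ℝ) - 1 ≤ ∑ e ∈ PPI.Dset edge E r, x e := feas r
          have hb2 : ε * |∑ e ∈ PPI.Dset edge E r, d e|
              ≤ ∑ e ∈ PPI.Dset edge E r, x e - ((PPI.nparts r : ℝ) - 1) :=
            key _ _ _ (abs_nonneg _) (by linarith) hb1
          have habs : |σ * ∑ e ∈ PPI.Dset edge E r, d e|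
              ≤ ε * |∑ e ∈ PPI.Dset edge E r, d e| := by
            rw [abs_mul]
            exact mul_le_mul_of_nonneg_right hσ (abs_nonneg _)
          have := neg_abs_le (σ * ∑ e ∈ PPI.Dset edge E r, d e)
          linarith
    have hy1 := hmem (-ε) (by rw [abs_neg, abs_of_pos hεpos])
    have hy2 := hmem ε (by rw [abs_of_pos hεpos])
    have hseg : x ∈ openSegment ℝ (fun e => x e + (-ε) * d e) (fun e => x e + ε * d e) := by
      refine ⟨1/2, 1/2, by norm_num, by norm_num, by norm_num, ?_⟩
      funext e
      simp only [Pi.add_apply, Pi.smul_apply, smul_eq_mul]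
      ring
    have hfin := hxExt hy1 hy2 hseg
    have := congrFun hfin e0
    change x e0 + -ε * d e0 = x e0 at this
    have : ε * d e0 = 0 := by linarith
    rcases mul_eq_zero.1 this with h | h
    · exact hεpos.ne' h
    · exact he0 h
  -- the chain of tight setoids
  have hstep : ∀ c : Setoid V, ∃ c' : Setoid V,
      (c = ⊤ → c' = ⊤) ∧
      (c ≠ ⊤ → ((∑ e ∈ PPI.Dset edge E c', x e = (PPI.nparts c' : ℝ) - 1) ∧ c < c' ∧
          ∀ t : Setoid V, (∑ e ∈ PPI.Dset edge E t, x e = (PPI.nparts t : ℝ) - 1) →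
            c < t → ¬ t < c')) := by
    intro c
    by_cases hc : c = ⊤
    · exact ⟨⊤, fun _ => rfl, fun h => absurd hc h⟩
    · have hne : ((Finset.univ : Finset (Setoid V)).filter fun t =>
          (∑ e ∈ PPI.Dset edge E t, x e = (PPI.nparts t : ℝ) - 1) ∧ c < t).Nonempty := by
        refine ⟨⊤, Finset.mem_filter.2 ⟨Finset.mem_univ _, tight_top, ?_⟩⟩
        exact lt_top_iff_ne_top.2 hc
      obtain ⟨m, hm, hmin⟩ := Finset.exists_minimal hne
      rw [Finset.mem_filter] at hm
      refine ⟨m, fun h => absurd h hc, fun _ => ⟨hm.2.1, hm.2.2, ?_⟩⟩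
      intro t ht hct htm
      exact htm.not_ge (hmin (Finset.mem_filter.2 ⟨Finset.mem_univ _, ht, hct⟩) htm.le)
  choose nxt hnxt_top hnxt using hstep
  set 𝒯 : Finset (Setoid V) := (Finset.univ : Finset (Setoid V)).filter
    (fun r => ∑ e ∈ PPI.Dset edge E r, x e = (PPI.nparts r : ℝ) - 1) with h𝒯
  have h𝒯ne : 𝒯.Nonempty := ⟨⊤, Finset.mem_filter.2 ⟨Finset.mem_univ _, tight_top⟩⟩
  have tight_inf : ∀ (t : Finset (Setoid V)) (ht : t.Nonempty),
      (∀ r ∈ t, ∑ e ∈ PPI.Dset edge E r, x e = (PPI.nparts r : ℝ) - 1) →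
      ∑ e ∈ PPI.Dset edge E (t.inf' ht id), x e = (PPI.nparts (t.inf' ht id) : ℝ) - 1 := by
    intro t ht
    induction ht using Finset.Nonempty.cons_induction with
    | singleton a => intro h; simpa using h a (Finset.mem_singleton_self a)
    | cons a s ha hs ih =>
      intro h
      rw [Finset.inf'_cons]
      exact (uncross _ _ (h a (Finset.mem_cons_self a s))
        (ih fun r hr => h r (Finset.mem_cons.2 (Or.inr hr)))).1
  set m0 : Setoid V := 𝒯.inf' h𝒯ne id with hm0
  have tight_m0 : ∑ e ∈ PPI.Dset edge E m0, x e = (PPI.nparts m0 : ℝ) - 1 :=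
    tight_inf 𝒯 h𝒯ne fun r hr => (Finset.mem_filter.1 hr).2
  have m0_le : ∀ r : Setoid V, (∑ e ∈ PPI.Dset edge E r, x e = (PPI.nparts r : ℝ) - 1) →
      m0 ≤ r := by
    intro r hr
    have hmem : r ∈ 𝒯 := Finset.mem_filter.2 ⟨Finset.mem_univ _, hr⟩
    exact Finset.inf'_le id hmem
  set c : ℕ → Setoid V := fun n => Nat.rec m0 (fun _ prev => nxt prev) n with hc
  have hc0 : c 0 = m0 := rfl
  have hcs : ∀ j, c (j + 1) = nxt (c j) := fun j => rfl
  have tight_c : ∀ j, ∑ e ∈ PPI.Dset edge E (c j), x e = (PPI.nparts (c j) : ℝ) - 1 := by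
    intro j
    induction j with
    | zero => exact tight_m0
    | succ j ih =>
      by_cases h : c j = ⊤
      · rw [hcs j, hnxt_top _ h]
        exact tight_top
      · exact (hnxt _ h).1
  have mono_c : Monotone c := by
    apply monotone_nat_of_le_succ
    intro j
    by_cases h : c j = ⊤
    · rw [hcs j, hnxt_top _ h, h]
    · exact le_of_lt (hnxt _ h).2.1
  have htopN : ∃ N, c N = ⊤ := by
    by_contra h
    push_neg at h
    have hstrict : StrictMono c := strictMono_nat_of_lt_succ fun j => (hnxt _ (h j)).2.1
    obtain ⟨i, j, hij, hcij⟩ := Finite.exists_ne_map_eq_of_infinite c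
    exact hij (hstrict.injective hcij)
  obtain ⟨N, hN⟩ := htopN
  have sat : ∀ j, ∀ t : Setoid V,
      (∑ e ∈ PPI.Dset edge E t, x e = (PPI.nparts t : ℝ) - 1) →
      t ≤ c (j + 1) → ¬ t ≤ c j → t ⊔ c j = c (j + 1) := by
    intro j t ht hle hnle
    have hcj : c j ≠ ⊤ := fun h => hnle (h ▸ le_top)
    have h1 := hnxt _ hcj
    have hu_t := (uncross t (c j) ht (tight_c j)).2.1
    have hlt : c j < t ⊔ c j := by
      refine lt_of_le_of_ne le_sup_right fun hh => hnle ?_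
      exact le_sup_left.trans (le_of_eq hh.symm)
    have hle2 : t ⊔ c j ≤ c (j + 1) := sup_le hle (mono_c (Nat.le_succ j))
    have hmin := h1.2.2 (t ⊔ c j) hu_t hlt
    rw [hcs j] at hle2 ⊢
    exact (lt_or_eq_of_le hle2).resolve_left hmin
  -- modular induction: chain-orthogonality implies orthogonality to all tight constraints
  have modind : ∀ d : α → ℝ,
      (∀ j, ∑ e ∈ PPI.Dset edge E (c j) ∩ S, d e = 0) →
      ∀ r : Setoid V, (∑ e ∈ PPI.Dset edge E r, x e = (PPI.nparts r : ℝ) - 1) →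
      ∑ e ∈ PPI.Dset edge E r ∩ S, d e = 0 := by
    intro d hdc
    have main : ∀ j, ∀ r : Setoid V,
        (∑ e ∈ PPI.Dset edge E r, x e = (PPI.nparts r : ℝ) - 1) →
        r ≤ c j → ∑ e ∈ PPI.Dset edge E r ∩ S, d e = 0 := by
      intro j
      induction j with
      | zero =>
        intro r hr hle
        have hreq : r = c 0 := le_antisymm hle (m0_le r hr)
        rw [hreq]
        exact hdc 0
      | succ j ih =>
        intro r hr hle
        by_cases hrc : r ≤ c j
        · exact ih r hr hrc
        · have hsup := sat j r hr hle hrc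
          obtain ⟨hw, -, hinf, hsup2⟩ := uncross r (c j) hr (tight_c j)
          have hih := ih _ hw inf_le_right
          have hsum : ∑ e ∈ PPI.Dset edge E (r ⊓ c j) ∩ S, d e
              + ∑ e ∈ PPI.Dset edge E (r ⊔ c j) ∩ S, d e
              = ∑ e ∈ PPI.Dset edge E r ∩ S, d e
                + ∑ e ∈ PPI.Dset edge E (c j) ∩ S, d e := by
            rw [hinf, hsup2, Finset.union_inter_distrib_right, inter_inter_distrib_right]
            exact Finset.sum_union_inter
          rw [hsup] at hsum
          have h1 := hdc (j + 1)
          have h2 := hdc j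
          linarith only [hsum, hih, h1, h2]
    intro r hr
    exact main N r hr (hN ▸ le_top)
  -- conclusion
  intro e
  by_cases heS : e ∈ S
  · have he0 : e ∈ PPI.Dset edge E (c 0) := by
      by_contra hno
      have hzero := orth (fun e' => if e' = e then (1 : ℝ) else 0)
        (fun e' he' => by
          show (if e' = e then (1 : ℝ) else 0) = 0
          rw [if_neg (fun h => he' (by rw [h]; exact heS))])
        (fun r hr => by
          have hne : e ∉ PPI.Dset edge E r ∩ S := fun hmem =>
            hno (PPI.Dset_antitone edge E (m0_le r hr) (Finset.mem_inter.1 hmem).1)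
          simp only [Finset.sum_ite_eq']
          rw [if_neg hne])
      have := congrFun hzero e
      simp at this
    have hQN : e ∉ PPI.Dset edge E (c N) := by
      rw [hN, PPI.Dset_top]
      exact Finset.notMem_empty e
    have hQ : ∃ j, e ∉ PPI.Dset edge E (c j) := ⟨N, hQN⟩
    set k : ℕ := Nat.find hQ with hk
    have hkk : e ∉ PPI.Dset edge E (c k) := Nat.find_spec hQ
    have hkpos : 0 < k := by
      rcases Nat.eq_zero_or_pos k with h | h
      · rw [h] at hkk
        exact absurd he0 hkk
      · exact h
    set j0 : ℕ := k - 1 with hj0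
    have hj0k : j0 + 1 = k := Nat.succ_pred_eq_of_pos hkpos
    have hj0mem : e ∈ PPI.Dset edge E (c j0) := by
      have := Nat.find_min hQ (show j0 < k by omega)
      rwa [not_not] at this
    -- membership pattern along the chain
    have pattern : ∀ j, e ∈ PPI.Dset edge E (c j) ↔ j ≤ j0 := by
      intro j
      constructor
      · intro hmem
        by_contra hgt
        have hk_le_j : k ≤ j := by omega
        exact hkk (PPI.Dset_antitone edge E (mono_c hk_le_j) hmem)
      · intro hle
        exact PPI.Dset_antitone edge E (mono_c hle) hj0mem
    -- the layer of e is a singleton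
    have hsub : PPI.Dset edge E (c k) ∩ S ⊆ PPI.Dset edge E (c j0) ∩ S :=
      Finset.inter_subset_inter (PPI.Dset_antitone edge E (mono_c (by omega))) Finset.Subset.rfl
    have hlayer : (PPI.Dset edge E (c j0) ∩ S) \ (PPI.Dset edge E (c k) ∩ S) = {e} := by
      apply Finset.Subset.antisymm
      · intro f hf
        rw [Finset.mem_sdiff, Finset.mem_inter] at hf
        obtain ⟨⟨hf1, hfS⟩, hf2⟩ := hf
        have hf2' : f ∉ PPI.Dset edge E (c k) := fun h => hf2 (Finset.mem_inter.2 ⟨h, hfS⟩)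
        rw [Finset.mem_singleton]
        by_contra hfe
        -- f and e have the same membership pattern; contradiction with rigidity
        have patf : ∀ j, f ∈ PPI.Dset edge E (c j) ↔ j ≤ j0 := by
          intro j
          constructor
          · intro hmem
            by_contra hgt
            exact hf2' (PPI.Dset_antitone edge E (mono_c (by omega)) hmem)
          · intro hle
            exact PPI.Dset_antitone edge E (mono_c hle) hf1
        set d : α → ℝ := fun e' => (if e' = e then (1 : ℝ) else 0)
          + (if e' = f then (-1 : ℝ) else 0) with hd_def
        have hdsupp : ∀ e', e' ∉ S → d e' = 0 := by
          intro e' he'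
          show (if e' = e then (1 : ℝ) else 0) + (if e' = f then (-1 : ℝ) else 0) = 0
          rw [if_neg (fun h => he' (by rw [h]; exact heS)),
            if_neg (fun h => he' (by rw [h]; exact hfS))]
          ring
        have hdchain : ∀ j, ∑ e' ∈ PPI.Dset edge E (c j) ∩ S, d e' = 0 := by
          intro j
          simp only [hd_def]
          rw [Finset.sum_add_distrib,
            Finset.sum_ite_eq' (PPI.Dset edge E (c j) ∩ S) e (fun _ => (1 : ℝ)),
            Finset.sum_ite_eq' (PPI.Dset edge E (c j) ∩ S) f (fun _ => (-1 : ℝ))]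
          have hiff : e ∈ PPI.Dset edge E (c j) ∩ S ↔ f ∈ PPI.Dset edge E (c j) ∩ S := by
            rw [Finset.mem_inter, Finset.mem_inter, pattern, patf]
            exact ⟨fun h => ⟨h.1, hfS⟩, fun h => ⟨h.1, heS⟩⟩
          by_cases hmem : e ∈ PPI.Dset edge E (c j) ∩ S
          · rw [if_pos hmem, if_pos (hiff.1 hmem)]
            ring
          · rw [if_neg hmem, if_neg (fun h => hmem (hiff.2 h))]
            ring
        have hzero := orth d hdsupp (modind d hdchain)
        have hthis : (if e = e then (1 : ℝ) else 0) + (if e = f then (-1 : ℝ) else 0) = 0 :=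
          congrFun hzero e
        rw [if_pos rfl, if_neg (fun h => hfe h.symm)] at hthis
        norm_num at hthis
      · intro f hf
        rw [Finset.mem_singleton] at hf
        subst hf
        rw [Finset.mem_sdiff, Finset.mem_inter]
        exact ⟨⟨hj0mem, heS⟩, fun h => hkk (Finset.mem_inter.1 h).1⟩
    -- telescoping
    have hsd := Finset.sum_sdiff (f := x) hsub
    rw [hlayer, Finset.sum_singleton] at hsd
    have hv1 : ∑ e' ∈ PPI.Dset edge E (c j0) ∩ S, x e'
        = (PPI.nparts (c j0) : ℝ) - 1 := by
      rw [sum_inter x hxS]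
      exact tight_c j0
    have hv2 : ∑ e' ∈ PPI.Dset edge E (c k) ∩ S, x e'
        = (PPI.nparts (c k) : ℝ) - 1 := by
      rw [sum_inter x hxS]
      exact tight_c k
    refine ⟨(PPI.nparts (c j0) : ℤ) - (PPI.nparts (c k) : ℤ), ?_⟩
    push_cast
    linarith
  · exact ⟨0, by rw [hxS e heS]; simp⟩
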